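/- Let f : X → Y be a perfect open continuous surjection, ρ a quasi κ-metric on X, and define d(y, cl U) = sup{ρ(x, f⁻¹(cl U)) : x ∈ f⁻¹(y)} for open U ⊆ Y. Then d(·, cl U) is continuous on Y for every open U ⊆ Y. -/

import Mathlib

/-- A set is regularly closed if it equals the closure of its interior. -/
def RegClosed {X : Type*} [TopologicalSpace X] (C : Set X) : Prop :=
  C = closure (interior C)

/-- A set is regularly open if it equals the interior of its closure. -/
def RegOpen {X : Type*} [TopologicalSpace X] (U : Set X) : Prop :=
  U = interior (closure U)

/-- A quasi κ-metric on `X`: a nonnegative function of a point and a regularly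
closed set satisfying axioms K1*, K2, K3 and K4. -/
structure IsQuasiKappaMetric {X : Type*} [TopologicalSpace X] (ρ : X → Set X → ℝ) : Prop where
  nonneg : ∀ x C, RegClosed C → 0 ≤ ρ x C
  k1star : ∀ C : Set X, RegClosed C → ∃ V : Set X, IsOpen V ∧ V ⊆ Cᶜ ∧
    Cᶜ ⊆ closure V ∧ ∀ x, 0 < ρ x C ↔ x ∈ V
  k2 : ∀ x (C C' : Set X), RegClosed C → RegClosed C' → C ⊆ C' → ρ x C' ≤ ρ x C
  k3 : ∀ C : Set X, RegClosed C → Continuous (fun x => ρ x C)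
  k4 : ∀ S : Set (Set X), S.Nonempty → (∀ C ∈ S, RegClosed C) → IsChain (· ⊆ ·) S →
    ∀ x, ρ x (closure (⋃₀ S)) = sInf {r : ℝ | ∃ C ∈ S, r = ρ x C}

lemma preimage_closure_of_open {X Y : Type*} [TopologicalSpace X] [TopologicalSpace Y]
    {f : X → Y} (hcont : Continuous f) (hopen : IsOpenMap f) {U : Set Y} :
    f ⁻¹' (closure U) = closure (f ⁻¹' U) := by
  apply Set.Subset.antisymm
  · intro x hx
    rw [mem_closure_iff]
    intro V hV hxV
    have : f x ∈ closure U := hx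
    rw [mem_closure_iff] at this
    obtain ⟨_, ⟨x', hx'V, rfl⟩, hU'⟩ := this (f '' V) (hopen V hV) ⟨x, hxV, rfl⟩
    exact ⟨x', hx'V, hU'⟩
  · exact hcont.closure_preimage_subset U

theorem stmt12 {X Y : Type*} [TopologicalSpace X] [TopologicalSpace Y]
    (f : X → Y) (hcont : Continuous f) (hopen : IsOpenMap f)
    (hclosed : IsClosedMap f) (hfib : ∀ y : Y, IsCompact (f ⁻¹' {y}))
    (hsurj : Function.Surjective f)
    (ρ : X → Set X → ℝ) (hρ : IsQuasiKappaMetric ρ)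
    (d : Y → Set Y → ℝ)
    (hd : ∀ (y : Y) (U : Set Y), IsOpen U →
      d y (closure U) = sSup {r : ℝ | ∃ x ∈ f ⁻¹' {y}, r = ρ x (f ⁻¹' (closure U))}) :
    ∀ U : Set Y, IsOpen U → Continuous (fun y => d y (closure U)) := by
  intro U hU
  set C : Set X := f ⁻¹' (closure U) with hCdef
  have hC : RegClosed C := by
    rw [RegClosed, hCdef, preimage_closure_of_open hcont hopen]
    have h1 : f ⁻¹' U ⊆ interior (closure (f ⁻¹' U)) :=
      interior_maximal subset_closure (hU.preimage hcont)
    refine Set.Subset.antisymm (closure_mono h1) ?_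
    calc closure (interior (closure (f ⁻¹' U))) ⊆ closure (closure (f ⁻¹' U)) :=
          closure_mono interior_subset
      _ = closure (f ⁻¹' U) := closure_closure
  set g : X → ℝ := fun x => ρ x C with hg
  have hgc : Continuous g := hρ.k3 C hC
  have key : (fun y => d y (closure U)) = fun y => sSup (g '' (f ⁻¹' {y})) := by
    funext y
    rw [hd y U hU]
    congr 1
    ext r
    simp [Set.mem_image, eq_comm, hg, hCdef]
  rw [key]
  -- sup over fiber facts
  have hmax : ∀ y : Y, ∃ x ∈ f ⁻¹' {y}, sSup (g '' (f ⁻¹' {y})) = g x := fun y =>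
    (hfib y).exists_sSup_image_eq ⟨(hsurj y).choose, (hsurj y).choose_spec⟩ hgc.continuousOn
  have hle : ∀ y (x : X), x ∈ f ⁻¹' {y} → g x ≤ sSup (g '' (f ⁻¹' {y})) := fun y x hx =>
    le_csSup ((hfib y).bddAbove_image hgc.continuousOn) ⟨x, hx, rfl⟩
  rw [continuous_iff_lower_upperSemicontinuous]
  constructor
  · rw [lowerSemicontinuous_iff_isOpen_preimage]
    intro c
    have : (fun y => sSup (g '' (f ⁻¹' {y}))) ⁻¹' Set.Ioi c = f '' {x | c < g x} := by
      ext y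
      simp only [Set.mem_preimage, Set.mem_Ioi, Set.mem_image, Set.mem_setOf_eq]
      constructor
      · intro h
        obtain ⟨x, hx, hxe⟩ := hmax y
        exact ⟨x, hxe ▸ h, hx⟩
      · rintro ⟨x, hcx, rfl⟩
        exact lt_of_lt_of_le hcx (hle _ x rfl)

    rw [this]
    exact hopen _ (isOpen_lt continuous_const hgc)
  · rw [upperSemicontinuous_iff_isOpen_preimage]
    intro c
    have : (fun y => sSup (g '' (f ⁻¹' {y}))) ⁻¹' Set.Iio c = (f '' {x | c ≤ g x})ᶜ := by
      ext y
      simp only [Set.mem_preimage, Set.mem_Iio, Set.mem_compl_iff, Set.mem_image,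
        Set.mem_setOf_eq, not_exists, not_and]
      constructor
      · intro h x hcx hxy
        exact absurd (lt_of_le_of_lt (hcx.trans (hle _ x hxy)) h) (lt_irrefl _)
      · intro h
        obtain ⟨x, hx, hxe⟩ := hmax y
        rw [hxe]
        by_contra hc
        exact h x (not_lt.1 hc) hx
    rw [this]
    exact (hclosed _ (isClosed_le continuous_const hgc)).isOpen_compl
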